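/- arXiv:1303.5993 — 3 statements merged into one kernel-verified Lean document; each statement's English description precedes it below -/
import Mathlib

section
/- (Marstrand slicing theorem) Let C ⊆ ℝ^m × ℝ^l, let α > 0 and β > 0. Assume the projection Proj_A(C) = {a ∈ ℝ^m : ∃ b, (a,b) ∈ C} has Hausdorff dimension at least α, and that for every a ∈ Proj_A(C) the slice B_a = {b ∈ ℝ^l : (a,b) ∈ C} has Hausdorff dimension at least β. Then dim_H(C) ≥ α + β. -/
open scoped ENNReal


open scoped ENNReal NNReal
open Set MeasureTheory EMetric

namespace Stmt5Aux

noncomputable section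

variable {X : Type*} [EMetricSpace X]

/-- Hausdorff-type content with exponent `d`. -/
def hCont (d : ℝ) : OuterMeasure X :=
  OuterMeasure.ofFunction (fun E => ⨆ _ : E.Nonempty, Metric.ediam E ^ d)
    (by simp)

lemma hCont_le_pow (d : ℝ) (E : Set X) : hCont d E ≤ Metric.ediam E ^ d :=
  (OuterMeasure.ofFunction_le _).trans (iSup_le fun _ => le_rfl)

lemma hCont_le_tsum {ι : Type*} [Countable ι] (d : ℝ) (S : Set X)
    (U : ι → Set X) (hU : S ⊆ ⋃ i, U i) :
    hCont d S ≤ ∑' i, Metric.ediam (U i) ^ d := by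
  calc hCont d S ≤ hCont d (⋃ i, U i) := measure_mono hU
    _ ≤ ∑' i, hCont d (U i) := measure_iUnion_le _
    _ ≤ ∑' i, Metric.ediam (U i) ^ d := ENNReal.tsum_le_tsum fun i => hCont_le_pow d (U i)

variable [MeasurableSpace X] [BorelSpace X]

lemma hausdorffMeasure_eq_zero_of_hCont {d : ℝ} (hd : 0 < d) {S : Set X}
    (h : hCont d S = 0) : μH[d] S = 0 := by
  rw [MeasureTheory.Measure.hausdorffMeasure_apply]
  refine le_antisymm (iSup₂_le fun r hr => ?_) (zero_le)
  refine ENNReal.le_of_forall_pos_le_add fun ε hε _ => ?_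
  rw [zero_add]
  set δ : ℝ≥0∞ := min (ε : ℝ≥0∞) (min r 1 ^ d) with hδ
  have hδpos : 0 < δ := by
    refine lt_min (by exact_mod_cast hε) ?_
    refine ENNReal.rpow_pos (lt_min hr zero_lt_one) ?_
    exact ne_top_of_le_ne_top ENNReal.one_ne_top (min_le_right _ _)
  have h2 : hCont d S < δ := h ▸ hδpos
  rw [hCont, OuterMeasure.ofFunction_apply] at h2
  obtain ⟨U, h2⟩ := iInf_lt_iff.mp h2
  obtain ⟨hU, hsum⟩ := iInf_lt_iff.mp h2
  have hdiam : ∀ n, Metric.ediam (U n) ≤ r := by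
    intro n
    rcases eq_empty_or_nonempty (U n) with he | he
    · simp [he, diam_empty]
    · have hterm : Metric.ediam (U n) ^ d < δ := by
        refine lt_of_le_of_lt ?_ hsum
        refine le_trans ?_ (ENNReal.le_tsum n)
        simp [he]
      by_contra hc
      push_neg at hc
      have : min r 1 < Metric.ediam (U n) := lt_of_le_of_lt (min_le_left _ _) hc
      have h3 : min r 1 ^ d < Metric.ediam (U n) ^ d := ENNReal.rpow_lt_rpow this hd
      have h4 : Metric.ediam (U n) ^ d < min r 1 ^ d := lt_of_lt_of_le hterm (min_le_right _ _)
      exact absurd (h3.trans h4) (lt_irrefl _)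
  refine le_trans (iInf_le_of_le U (iInf_le_of_le hU (iInf_le_of_le hdiam le_rfl))) ?_
  exact le_trans hsum.le (min_le_left _ _)

lemma le_hausdorffMeasure_of_covers {d : ℝ} (hd : 0 < d) {S : Set X} {c : ℝ≥0∞}
    (H : ∀ U : ℕ → Set X, S ⊆ ⋃ n, U n → (∀ n, Metric.ediam (U n) ≤ 1) →
      c ≤ ∑' n, Metric.ediam (U n) ^ d) :
    c ≤ μH[d] S := by
  rw [MeasureTheory.Measure.hausdorffMeasure_apply]
  refine le_trans ?_ (le_iSup₂ (1 : ℝ≥0∞) one_pos)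
  refine le_iInf fun U => le_iInf fun hU => le_iInf fun hd1 => ?_
  have : ∑' n, ⨆ _ : (U n).Nonempty, Metric.ediam (U n) ^ d = ∑' n, Metric.ediam (U n) ^ d := by
    refine tsum_congr fun n => ?_
    rcases eq_empty_or_nonempty (U n) with he | he
    · simp [he, diam_empty, ENNReal.zero_rpow_of_pos hd]
    · simp [he]
  rw [this]
  exact H U hU hd1

end

end Stmt5Aux

open scoped ENNReal NNReal
open Set MeasureTheory EMetric

namespace Stmt5Aux

noncomputable section

variable {m : ℕ}

/-- Half-open dyadic cube of side `2^{-k}` in `ℝ^m`. -/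
def cube (m : ℕ) (k : ℕ) (z : Fin m → ℤ) : Set (EuclideanSpace ℝ (Fin m)) :=
  {x | ∀ j, (z j : ℝ) ≤ 2 ^ k * x j ∧ 2 ^ k * x j < z j + 1}

/-- Position of the scale-`k` dyadic cube containing `a`. -/
def fl (k : ℕ) (a : EuclideanSpace ℝ (Fin m)) : Fin m → ℤ := fun j => ⌊2 ^ k * a j⌋

lemma mem_cube_iff {k : ℕ} {z : Fin m → ℤ} {a : EuclideanSpace ℝ (Fin m)} :
    a ∈ cube m k z ↔ z = fl k a := by
  constructor
  · intro h
    funext j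
    exact ((Int.floor_eq_iff).mpr ⟨(h j).1, (h j).2⟩).symm
  · rintro rfl
    exact fun j => ⟨Int.floor_le _, Int.lt_floor_add_one _⟩

lemma mem_cube_self (k : ℕ) (a : EuclideanSpace ℝ (Fin m)) : a ∈ cube m k (fl k a) :=
  mem_cube_iff.mpr rfl

lemma coord_dist_lt {k : ℕ} {z : Fin m → ℤ} {x y : EuclideanSpace ℝ (Fin m)}
    (hx : x ∈ cube m k z) (hy : y ∈ cube m k z) (j : Fin m) :
    dist (x j) (y j) ≤ (2 : ℝ) ^ (-(k : ℝ)) := by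
  have h2k : (0:ℝ) < 2 ^ k := by positivity
  have h1 : |2 ^ k * x j - 2 ^ k * y j| ≤ 1 := by
    rw [abs_le]
    constructor <;> nlinarith [(hx j).1, (hx j).2, (hy j).1, (hy j).2]
  have : |x j - y j| ≤ (2:ℝ) ^ (-(k:ℝ)) := by
    rw [Real.rpow_neg (by norm_num), Real.rpow_natCast]
    rw [← mul_sub, abs_mul, abs_of_pos h2k] at h1
    rw [inv_eq_one_div, le_div_iff₀ h2k]
    linarith [h1]
  simpa [Real.dist_eq] using this

lemma dist_le_sum_coord (x y : EuclideanSpace ℝ (Fin m)) :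
    dist x y ≤ ∑ j, dist (x j) (y j) := by
  rw [EuclideanSpace.dist_eq]
  have hnn : ∀ j : Fin m, (0:ℝ) ≤ dist (x j) (y j) := fun j => dist_nonneg
  have h1 : ∑ j, dist (x j) (y j) ^ 2 ≤ (∑ j, dist (x j) (y j)) ^ 2 := by
    rw [sq (∑ j, dist (x j) (y j))]
    rw [Finset.sum_mul]
    refine Finset.sum_le_sum fun j _ => ?_
    rw [sq]
    exact mul_le_mul_of_nonneg_left
      (Finset.single_le_sum (fun i _ => hnn i) (Finset.mem_univ j)) (hnn j)
  calc √(∑ j, dist (x j) (y j) ^ 2) ≤ √((∑ j, dist (x j) (y j)) ^ 2) :=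
        Real.sqrt_le_sqrt h1
    _ = ∑ j, dist (x j) (y j) := Real.sqrt_sq (Finset.sum_nonneg fun j _ => hnn j)

lemma diam_cube_le (k : ℕ) (z : Fin m → ℤ) :
    Metric.ediam (cube m k z) ≤ (m : ℝ≥0∞) * (2 : ℝ≥0∞) ^ (-(k : ℝ)) := by
  refine diam_le fun x hx y hy => ?_
  rw [edist_dist]
  have hdist : dist x y ≤ (m : ℝ) * (2:ℝ) ^ (-(k:ℝ)) := by
    refine (dist_le_sum_coord x y).trans ?_
    calc ∑ j, dist (x j) (y j) ≤ ∑ _j : Fin m, (2:ℝ) ^ (-(k:ℝ)) :=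
          Finset.sum_le_sum fun j _ => coord_dist_lt hx hy j
      _ = (m:ℝ) * (2:ℝ) ^ (-(k:ℝ)) := by simp [Finset.sum_const, mul_comm]
  refine (ENNReal.ofReal_le_ofReal hdist).trans ?_
  rw [ENNReal.ofReal_mul (by positivity)]
  gcongr
  · simp
  · rw [← ENNReal.ofReal_rpow_of_pos (by norm_num)]
    simp

end

end Stmt5Aux

open scoped ENNReal NNReal
open Set MeasureTheory EMetric

namespace Stmt5Aux
noncomputable section

/-- Required depth at level `k`. -/
def dd (σ : ℝ) (k : ℕ) : ℕ := ⌈((k:ℝ)+1)/σ⌉₊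

/-- Normalizing constant. -/
def Zval (σ : ℝ) : ℝ≥0∞ := ∑' k : ℕ, (dd σ k : ℝ≥0∞) * (2:ℝ≥0∞) ^ (-(k:ℝ))

lemma dd_ge (hσ : 0 < σ) (k : ℕ) : (k:ℝ) + 1 ≤ dd σ k * σ := by
  have := Nat.le_ceil (((k:ℝ)+1)/σ)
  rw [div_le_iff₀ hσ] at this
  exact this

lemma two_rpow_neg_nat (k : ℕ) : (2:ℝ≥0∞) ^ (-(k:ℝ)) = ((2:ℝ≥0∞)⁻¹) ^ k := by
  rw [ENNReal.rpow_neg, ENNReal.rpow_natCast, ← ENNReal.inv_pow]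

lemma one_le_Zval (hσ : 0 < σ) : 1 ≤ Zval σ := by
  have h0 : (1:ℝ≥0∞) ≤ (dd σ 0 : ℝ≥0∞) * (2:ℝ≥0∞) ^ (-(0:ℕ):ℝ) := by
    have : 1 ≤ dd σ 0 := Nat.ceil_pos.mpr (by positivity)
    simpa using (by exact_mod_cast this : (1:ℝ≥0∞) ≤ (dd σ 0 : ℝ≥0∞))
  exact h0.trans (ENNReal.le_tsum 0)

lemma Zval_ne_top (hσ : 0 < σ) : Zval σ ≠ ∞ := by
  have hsummable : Summable (fun k : ℕ => (((k:ℝ)+1)/σ + 1) * (2⁻¹:ℝ)^k) := by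
    have h1 : Summable (fun k : ℕ => ((k:ℝ)) * (2⁻¹:ℝ)^k) := by
      simpa using summable_pow_mul_geometric_of_norm_lt_one 1 (r := (2⁻¹:ℝ)) (by norm_num)
    have h2 : Summable (fun k : ℕ => (2⁻¹:ℝ)^k) := summable_geometric_of_lt_one (by norm_num) (by norm_num)
    have h3 : Summable (fun k : ℕ => ((k:ℝ)+1) * (2⁻¹:ℝ)^k) := by
      have := h1.add h2
      refine this.congr fun k => by ring
    have h4 := (h3.mul_left (1/σ)).add h2
    refine h4.congr fun k => by field_simp
  have hle : Zval σ ≤ ENNReal.ofReal (∑' k : ℕ, (((k:ℝ)+1)/σ + 1) * (2⁻¹:ℝ)^k) := by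
    rw [ENNReal.ofReal_tsum_of_nonneg (fun k => by positivity) hsummable]
    refine ENNReal.tsum_le_tsum fun k => ?_
    rw [two_rpow_neg_nat]
    have hbridge : ((dd σ k : ℝ≥0∞)) * ((2:ℝ≥0∞)⁻¹)^k
        = ENNReal.ofReal ((dd σ k : ℝ) * (2⁻¹:ℝ)^k) := by
      rw [ENNReal.ofReal_mul (by positivity), ENNReal.ofReal_natCast,
        ENNReal.ofReal_pow (by norm_num), ENNReal.ofReal_inv_of_pos (by norm_num)]
      norm_num
    rw [hbridge]
    refine ENNReal.ofReal_le_ofReal ?_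
    have hdd : (dd σ k : ℝ) ≤ ((k:ℝ)+1)/σ + 1 := (Nat.ceil_lt_add_one (by positivity)).le
    have : (0:ℝ) ≤ (2⁻¹:ℝ)^k := by positivity
    exact mul_le_mul_of_nonneg_right hdd this
  exact ne_top_of_le_ne_top ENNReal.ofReal_ne_top hle

lemma count_lemma {P : ℕ → Prop} [DecidablePred P] {d : ℕ}
    (h : (d : ℝ≥0∞) < ∑' j, if P j then (1:ℝ≥0∞) else 0) : ∃ j, d ≤ j ∧ P j := by
  by_contra hc
  push_neg at hc
  have hle : ∑' j, (if P j then (1:ℝ≥0∞) else 0) ≤ ∑' j, (if j < d then (1:ℝ≥0∞) else 0) := by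
    refine ENNReal.tsum_le_tsum fun j => ?_
    by_cases hP : P j
    · have hj : j < d := by
        by_contra hh
        exact hc j (le_of_not_gt hh) hP
      simp [hP, hj]
    · simp [hP]
  have heq : ∑' j : ℕ, (if j < d then (1:ℝ≥0∞) else 0) = d := by
    rw [tsum_eq_sum (s := Finset.range d) (by
      intro b hb
      simp [Finset.mem_range.not.mp hb])]
    have : ∀ b ∈ Finset.range d, (if b < d then (1:ℝ≥0∞) else 0) = 1 := by
      intro b hb
      simp [Finset.mem_range.mp hb]
    rw [Finset.sum_congr rfl this]
    simp
  rw [heq] at hle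
  exact absurd (h.trans_le hle) (lt_irrefl _)

/-- Weight level `k` relative to cap `c`. -/
def lev (c : ℝ≥0∞) (k : ℕ) (x : ℝ≥0∞) : Prop :=
  c * (2:ℝ≥0∞) ^ (-(k:ℝ)-1) < x ∧ x ≤ c * (2:ℝ≥0∞) ^ (-(k:ℝ))

lemma lev_unique {c x : ℝ≥0∞} (hc0 : c ≠ 0) (hct : c ≠ ∞) {k k' : ℕ}
    (h : lev c k x) (h' : lev c k' x) : k = k' := by
  by_contra hne
  wlog hlt : k < k' generalizing k k'
  · exact this h' h (Ne.symm hne) ((Ne.lt_or_gt hne).resolve_left hlt)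
  have h1 : x ≤ c * (2:ℝ≥0∞) ^ (-(k':ℝ)) := h'.2
  have h2 : (2:ℝ≥0∞) ^ (-(k':ℝ)) ≤ (2:ℝ≥0∞) ^ (-(k:ℝ)-1) := by
    refine ENNReal.rpow_le_rpow_of_exponent_le (by norm_num) ?_
    have : (k:ℝ) + 1 ≤ (k':ℝ) := by exact_mod_cast hlt
    linarith
  exact absurd (h1.trans (mul_le_mul_right h2 c)) (not_le.mpr h.1)

lemma lev_exists {c x : ℝ≥0∞} (hc0 : c ≠ 0) (hct : c ≠ ∞) (hx0 : x ≠ 0) (hxc : x < c) :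
    ∃ k, lev c k x := by
  classical
  have hex : ∃ n : ℕ, c * (2:ℝ≥0∞) ^ (-(n:ℝ)) < x := by
    obtain ⟨n, hn⟩ := ENNReal.exists_inv_two_pow_lt (a := x / c)
      (by
        simp only [ne_eq, ENNReal.div_eq_zero_iff, not_or]
        exact ⟨hx0, hct⟩)
    refine ⟨n, ?_⟩
    rw [two_rpow_neg_nat, mul_comm]
    exact ENNReal.mul_lt_of_lt_div (by simpa using hn)
  set n0 := Nat.find hex with hn0
  have hprop : c * (2:ℝ≥0∞) ^ (-(n0:ℝ)) < x := Nat.find_spec hex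
  have hn0ne : n0 ≠ 0 := by
    intro h0
    rw [h0] at hprop
    simp at hprop
    exact absurd hprop (not_lt.mpr hxc.le)
  refine ⟨n0 - 1, ?_, ?_⟩
  · have hcast : (((n0 - 1 : ℕ)):ℝ) = (n0:ℝ) - 1 := by
      have := Nat.one_le_iff_ne_zero.mpr hn0ne
      push_cast [Nat.cast_sub this]
      ring
    rw [hcast]
    convert hprop using 3
    ring
  · have hmin := Nat.find_min hex (m := n0 - 1) (Nat.sub_lt (Nat.pos_of_ne_zero hn0ne) one_pos)
    exact not_lt.mp hmin

end
end Stmt5Aux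
namespace Stmt5Aux
noncomputable section
open Set MeasureTheory EMetric
open scoped ENNReal

lemma hCont_le_cubes {m : ℕ} {s' : ℝ} (hs' : 0 ≤ s') (S : Set (EuclideanSpace ℝ (Fin m)))
    (T : Set (ℕ × (Fin m → ℤ)))
    (hcov : S ⊆ ⋃ Q ∈ T, cube m Q.1 Q.2) :
    hCont s' S ≤ ∑' Q : T, ((m:ℝ≥0∞) * (2:ℝ≥0∞) ^ (-((Q:ℕ × (Fin m → ℤ)).1:ℝ))) ^ s' := by
  have hcov' : S ⊆ ⋃ Q : T, cube m (Q:ℕ × (Fin m → ℤ)).1 (Q:ℕ × (Fin m → ℤ)).2 := by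
    intro a ha
    obtain ⟨Q, hQT, hQ⟩ := mem_iUnion₂.mp (hcov ha)
    exact mem_iUnion.mpr ⟨⟨Q, hQT⟩, hQ⟩
  refine (hCont_le_tsum s' S _ hcov').trans ?_
  exact ENNReal.tsum_le_tsum fun Q => ENNReal.rpow_le_rpow (diam_cube_le _ _) hs'

lemma lemmaW (m : ℕ) (s s' : ℝ) (hs : 0 ≤ s) (hss : s < s')
    (S : Set (EuclideanSpace ℝ (Fin m)))
    (w : ℕ × (Fin m → ℤ) → ℝ≥0∞)
    (θ : ℝ≥0∞) (hθ0 : θ ≠ 0) (hθt : θ ≠ ∞)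
    (hbr : ∀ a ∈ S, θ ≤ ∑' j : ℕ, w (j, fl j a)) :
    hCont s' S ≤ (m : ℝ≥0∞) ^ s' * (4 * Zval (s' - s)) * θ⁻¹ *
      ∑' Q : ℕ × (Fin m → ℤ), w Q * (2:ℝ≥0∞) ^ (-((Q.1 : ℝ)) * s) := by
  classical
  set σ := s' - s with hσdef
  have hσ : 0 < σ := by rw [hσdef]; linarith
  have hs' : 0 < s' := lt_of_le_of_lt hs hss
  set Z := Zval σ with hZdef
  have hZ1 : 1 ≤ Z := one_le_Zval hσ
  have hZt : Z ≠ ∞ := Zval_ne_top hσ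
  have hZ0 : Z ≠ 0 := by
    intro h
    rw [h] at hZ1
    simp at hZ1
  have h2Z0 : (2:ℝ≥0∞) * Z ≠ 0 := mul_ne_zero (by norm_num) hZ0
  have h2Zt : (2:ℝ≥0∞) * Z ≠ ∞ := ENNReal.mul_ne_top (by norm_num) hZt
  set c : ℝ≥0∞ := θ * (2 * Z)⁻¹ with hc
  have hc0 : c ≠ 0 := mul_ne_zero hθ0 (ENNReal.inv_ne_zero.mpr h2Zt)
  have hct : c ≠ ∞ := ENNReal.mul_ne_top hθt (ENNReal.inv_ne_top.mpr h2Z0)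
  have hcinv : c⁻¹ = 2 * Z * θ⁻¹ := by
    rw [hc, ENNReal.mul_inv (Or.inl hθ0) (Or.inl hθt), inv_inv, mul_comm]
  set cost := ∑' Q : ℕ × (Fin m → ℤ), w Q * (2:ℝ≥0∞) ^ (-((Q.1:ℝ)) * s) with hcost
  set costk : ℕ → ℝ≥0∞ := fun k => ∑' Q : ℕ × (Fin m → ℤ),
    if lev c k (w Q) then w Q * (2:ℝ≥0∞) ^ (-((Q.1:ℝ))*s) else 0 with hcostk
  set κ := (m:ℝ≥0∞) ^ s' with hκ
  set Nk : ℕ → EuclideanSpace ℝ (Fin m) → ℝ≥0∞ := fun k a =>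
    ∑' j : ℕ, if lev c k (w (j, fl j a)) then (1:ℝ≥0∞) else 0 with hNkdef
  set SH := {a ∈ S | ∃ j : ℕ, c ≤ w (j, fl j a)} with hSH
  set Sk : ℕ → Set (EuclideanSpace ℝ (Fin m)) := fun k => {a ∈ S | (dd σ k : ℝ≥0∞) < Nk k a}
    with hSkdef
  -- Claim 1 : S is covered by the heavy part and the level parts
  have claim1 : S ⊆ SH ∪ ⋃ k, Sk k := by
    intro a ha
    by_contra hmem
    simp only [mem_union, mem_iUnion, not_or, not_exists] at hmem
    obtain ⟨hH, hK⟩ := hmem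
    have hw : ∀ j : ℕ, w (j, fl j a) < c := by
      intro j
      by_contra hj
      exact hH ⟨ha, j, not_lt.mp hj⟩
    have hNa : ∀ k, Nk k a ≤ (dd σ k : ℝ≥0∞) := by
      intro k
      have := hK k
      rw [hSkdef] at this
      simp only [mem_setOf_eq, not_and, not_lt] at this
      exact this ha
    have hb1 : ∀ j, w (j, fl j a) ≤
        ∑' k : ℕ, if lev c k (w (j, fl j a)) then c * (2:ℝ≥0∞) ^ (-(k:ℝ)) else 0 := by
      intro j
      by_cases h0 : w (j, fl j a) = 0
      · simp [h0]
      · obtain ⟨k, hk⟩ := lev_exists hc0 hct h0 (hw j)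
        refine le_trans ?_ (ENNReal.le_tsum k)
        simp only [hk, if_true]
        exact hk.2
    have hchain : θ ≤ c * Z := by
      calc θ ≤ ∑' j : ℕ, w (j, fl j a) := hbr a ha
        _ ≤ ∑' j : ℕ, ∑' k : ℕ,
            if lev c k (w (j, fl j a)) then c * (2:ℝ≥0∞) ^ (-(k:ℝ)) else 0 :=
          ENNReal.tsum_le_tsum hb1
        _ = ∑' k : ℕ, ∑' j : ℕ,
            if lev c k (w (j, fl j a)) then c * (2:ℝ≥0∞) ^ (-(k:ℝ)) else 0 :=
          ENNReal.tsum_comm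
        _ = ∑' k : ℕ, c * (2:ℝ≥0∞) ^ (-(k:ℝ)) * Nk k a := by
          refine tsum_congr fun k => ?_
          rw [hNkdef]
          rw [← ENNReal.tsum_mul_left]
          refine tsum_congr fun j => ?_
          by_cases h : lev c k (w (j, fl j a)) <;> simp [h]
        _ ≤ ∑' k : ℕ, c * (2:ℝ≥0∞) ^ (-(k:ℝ)) * (dd σ k : ℝ≥0∞) :=
          ENNReal.tsum_le_tsum fun k => mul_le_mul_right (hNa k) _
        _ = c * Z := by
          rw [hZdef, Zval, ← ENNReal.tsum_mul_left]
          exact tsum_congr fun k => by ring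
    have hhalf : c * Z = θ * 2⁻¹ := by
      rw [hc, ENNReal.mul_inv (by norm_num) (Or.inr hZ0), mul_assoc, mul_assoc,
        ENNReal.inv_mul_cancel hZ0 hZt, mul_one]
    rw [hhalf] at hchain
    have hlt : θ * 2⁻¹ < θ := by
      rw [← div_eq_mul_inv]
      exact ENNReal.half_lt_self hθ0 hθt
    exact absurd hchain (not_le.mpr hlt)
  -- Claim 2 : the heavy part
  have claim2 : hCont s' SH ≤ κ * (c⁻¹ * cost) := by
    have hcovH : SH ⊆ ⋃ Q ∈ {Q : ℕ × (Fin m → ℤ) | c ≤ w Q}, cube m Q.1 Q.2 := by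
      rintro a ⟨haS, j, hj⟩
      exact mem_iUnion₂.mpr ⟨(j, fl j a), hj, mem_cube_self j a⟩
    refine (hCont_le_cubes hs'.le _ _ hcovH).trans ?_
    have hterm : ∀ Q : {Q : ℕ × (Fin m → ℤ) | c ≤ w Q},
        ((m:ℝ≥0∞) * (2:ℝ≥0∞) ^ (-((Q:ℕ × (Fin m → ℤ)).1:ℝ))) ^ s'
          ≤ κ * (c⁻¹ * (w (Q:ℕ × (Fin m → ℤ))
              * (2:ℝ≥0∞) ^ (-((Q:ℕ × (Fin m → ℤ)).1:ℝ) * s))) := by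
      rintro ⟨Q, hQ⟩
      obtain ⟨q, z⟩ := Q
      simp only [mem_setOf_eq] at hQ
      have h1 : ((m:ℝ≥0∞) * (2:ℝ≥0∞) ^ (-(q:ℝ))) ^ s'
          = κ * (2:ℝ≥0∞) ^ (-(q:ℝ) * s') := by
        rw [ENNReal.mul_rpow_of_nonneg _ _ hs'.le, hκ, ← ENNReal.rpow_mul]
      have h2 : (2:ℝ≥0∞) ^ (-(q:ℝ) * s') ≤ (2:ℝ≥0∞) ^ (-(q:ℝ) * s) := by
        refine ENNReal.rpow_le_rpow_of_exponent_le (by norm_num) ?_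
        nlinarith [Nat.cast_nonneg (α := ℝ) q]
      have h3 : (2:ℝ≥0∞) ^ (-(q:ℝ) * s) ≤ c⁻¹ * (w (q, z) * (2:ℝ≥0∞) ^ (-(q:ℝ) * s)) := by
        rw [← mul_assoc]
        nth_rewrite 1 [← one_mul ((2:ℝ≥0∞) ^ (-(q:ℝ) * s))]
        refine mul_le_mul_left ?_ _
        calc (1:ℝ≥0∞) = c⁻¹ * c := (ENNReal.inv_mul_cancel hc0 hct).symm
          _ ≤ c⁻¹ * w (q, z) := mul_le_mul_right hQ _
      calc ((m:ℝ≥0∞) * (2:ℝ≥0∞) ^ (-(q:ℝ))) ^ s' = κ * (2:ℝ≥0∞) ^ (-(q:ℝ) * s') := h1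
        _ ≤ κ * (c⁻¹ * (w (q, z) * (2:ℝ≥0∞) ^ (-(q:ℝ) * s))) :=
          mul_le_mul_right (h2.trans h3) κ
    refine (ENNReal.tsum_le_tsum hterm).trans ?_
    rw [ENNReal.tsum_mul_left, ENNReal.tsum_mul_left]
    refine mul_le_mul_right (mul_le_mul_right ?_ _) _
    have heq := tsum_subtype {Q : ℕ × (Fin m → ℤ) | c ≤ w Q}
      (fun Q => w Q * (2:ℝ≥0∞) ^ (-((Q.1:ℝ)) * s))
    rw [heq]
    exact ENNReal.tsum_le_tsum fun Q => Set.indicator_le_self _ _ Q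
  -- Claim 3 : the level parts
  have claim3 : ∀ k : ℕ, hCont s' (Sk k) ≤ κ * (c⁻¹ * costk k) := by
    intro k
    set Tk := {Q : ℕ × (Fin m → ℤ) | lev c k (w Q) ∧ dd σ k ≤ Q.1} with hTk
    have hcovk : Sk k ⊆ ⋃ Q ∈ Tk, cube m Q.1 Q.2 := by
      rintro a ⟨haS, hdlt⟩
      obtain ⟨j, hdj, hPj⟩ := count_lemma (P := fun j => lev c k (w (j, fl j a))) hdlt
      exact mem_iUnion₂.mpr ⟨(j, fl j a), ⟨hPj, hdj⟩, mem_cube_self j a⟩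
    refine (hCont_le_cubes hs'.le _ _ hcovk).trans ?_
    set D := κ * ((2:ℝ≥0∞) ^ (-((dd σ k : ℝ)) * σ) * (c * (2:ℝ≥0∞) ^ (-(k:ℝ)-1))⁻¹) with hD
    have hcl : c * (2:ℝ≥0∞) ^ (-(k:ℝ)-1) ≠ 0 :=
      mul_ne_zero hc0 (by simp [ENNReal.rpow_eq_zero_iff])
    have hclt : c * (2:ℝ≥0∞) ^ (-(k:ℝ)-1) ≠ ∞ := by
      refine ENNReal.mul_ne_top hct ?_
      simp [ENNReal.rpow_eq_top_iff]
    have hterm : ∀ Q : Tk,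
        ((m:ℝ≥0∞) * (2:ℝ≥0∞) ^ (-((Q:ℕ × (Fin m → ℤ)).1:ℝ))) ^ s'
          ≤ D * (w (Q:ℕ × (Fin m → ℤ)) * (2:ℝ≥0∞) ^ (-((Q:ℕ × (Fin m → ℤ)).1:ℝ) * s)) := by
      rintro ⟨⟨q, z⟩, hQ⟩
      obtain ⟨hlev, hdeep⟩ := hQ
      have h1 : ((m:ℝ≥0∞) * (2:ℝ≥0∞) ^ (-(q:ℝ))) ^ s'
          = κ * ((2:ℝ≥0∞) ^ (-(q:ℝ) * s) * (2:ℝ≥0∞) ^ (-(q:ℝ) * σ)) := by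
        rw [ENNReal.mul_rpow_of_nonneg _ _ hs'.le, hκ, ← ENNReal.rpow_mul,
          ← ENNReal.rpow_add _ _ (by norm_num) (by norm_num)]
        congr 2; rw [hσdef]; ring
      have h2 : (2:ℝ≥0∞) ^ (-(q:ℝ) * σ) ≤ (2:ℝ≥0∞) ^ (-((dd σ k:ℝ)) * σ) := by
        refine ENNReal.rpow_le_rpow_of_exponent_le (by norm_num) ?_
        have : (dd σ k : ℝ) ≤ (q:ℝ) := by exact_mod_cast hdeep
        nlinarith
      have h3 : (2:ℝ≥0∞) ^ (-(q:ℝ) * s)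
          ≤ (c * (2:ℝ≥0∞) ^ (-(k:ℝ)-1))⁻¹ * (w (q, z) * (2:ℝ≥0∞) ^ (-(q:ℝ) * s)) := by
        rw [← mul_assoc]
        nth_rewrite 1 [← one_mul ((2:ℝ≥0∞) ^ (-(q:ℝ) * s))]
        refine mul_le_mul_left ?_ _
        calc (1:ℝ≥0∞) = (c * (2:ℝ≥0∞) ^ (-(k:ℝ)-1))⁻¹ * (c * (2:ℝ≥0∞) ^ (-(k:ℝ)-1)) :=
            (ENNReal.inv_mul_cancel hcl hclt).symm
          _ ≤ (c * (2:ℝ≥0∞) ^ (-(k:ℝ)-1))⁻¹ * w (q, z) := mul_le_mul_right hlev.1.le _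
      calc ((m:ℝ≥0∞) * (2:ℝ≥0∞) ^ (-(q:ℝ))) ^ s'
          = κ * ((2:ℝ≥0∞) ^ (-(q:ℝ) * s) * (2:ℝ≥0∞) ^ (-(q:ℝ) * σ)) := h1
        _ = κ * ((2:ℝ≥0∞) ^ (-(q:ℝ) * σ) * (2:ℝ≥0∞) ^ (-(q:ℝ) * s)) := by ring
        _ ≤ κ * ((2:ℝ≥0∞) ^ (-((dd σ k:ℝ)) * σ) *
            ((c * (2:ℝ≥0∞) ^ (-(k:ℝ)-1))⁻¹ * (w (q, z) * (2:ℝ≥0∞) ^ (-(q:ℝ) * s)))) := by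
          refine mul_le_mul_right (mul_le_mul' h2 h3) κ
        _ = D * (w (q, z) * (2:ℝ≥0∞) ^ (-(q:ℝ) * s)) := by rw [hD]; ring
    refine (ENNReal.tsum_le_tsum hterm).trans ?_
    rw [ENNReal.tsum_mul_left]
    have hsub : ∑' Q : Tk, w (Q:ℕ × (Fin m → ℤ)) * (2:ℝ≥0∞) ^ (-((Q:ℕ × (Fin m → ℤ)).1:ℝ) * s)
        ≤ costk k := by
      have heq := tsum_subtype Tk
        (fun Q => w Q * (2:ℝ≥0∞) ^ (-((Q.1:ℝ)) * s))
      rw [heq, hcostk]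
      refine ENNReal.tsum_le_tsum fun Q => ?_
      rw [Set.indicator_apply]
      by_cases hQ : Q ∈ Tk
      · simp only [hQ, if_true, hTk]
        have : lev c k (w Q) := hQ.1
        simp [this, hQ.2]
      · simp [hQ]
    refine (mul_le_mul_right hsub D).trans ?_
    have hDle : D ≤ κ * c⁻¹ := by
      rw [hD, ENNReal.mul_inv (Or.inl hc0) (Or.inl hct)]
      refine mul_le_mul_right ?_ κ
      rw [← mul_assoc, mul_comm ((2:ℝ≥0∞) ^ (-((dd σ k:ℝ)) * σ)) c⁻¹, mul_assoc]
      nth_rewrite 2 [← mul_one c⁻¹]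
      refine mul_le_mul_right ?_ _
      rw [← ENNReal.rpow_neg ((2:ℝ≥0∞)) (-(k:ℝ)-1),
        ← ENNReal.rpow_add _ _ (by norm_num) (by norm_num)]
      have hexp : (2:ℝ≥0∞) ^ (-((dd σ k:ℝ)) * σ + (-(-(k:ℝ)-1))) ≤ (2:ℝ≥0∞) ^ (0:ℝ) := by
        refine ENNReal.rpow_le_rpow_of_exponent_le (by norm_num) ?_
        have := dd_ge hσ k
        nlinarith
      exact hexp.trans_eq ENNReal.rpow_zero
    calc D * costk k ≤ κ * c⁻¹ * costk k := mul_le_mul_left hDle _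
      _ = κ * (c⁻¹ * costk k) := by ring
  -- Claim 4 : level costs add up to at most the total cost
  have claim4 : ∑' k : ℕ, costk k ≤ cost := by
    rw [hcostk, hcost, ENNReal.tsum_comm]
    refine ENNReal.tsum_le_tsum fun Q => ?_
    by_cases hex : ∃ k, lev c k (w Q)
    · obtain ⟨k0, hk0⟩ := hex
      have hz : ∀ k' : ℕ, k' ≠ k0 →
          (if lev c k' (w Q) then w Q * (2:ℝ≥0∞) ^ (-((Q.1:ℝ))*s) else 0) = 0 := by
        intro k' hne
        by_cases h' : lev c k' (w Q)
        · exact absurd (lev_unique hc0 hct h' hk0) hne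
        · simp [h']
      rw [tsum_eq_single k0 hz]
      simp [hk0]
    · push_neg at hex
      have : ∀ k : ℕ, (if lev c k (w Q) then w Q * (2:ℝ≥0∞) ^ (-((Q.1:ℝ))*s) else 0) = 0 :=
        fun k => by simp [hex k]
      rw [tsum_congr this]
      simp
  -- Conclusion
  calc hCont s' S ≤ hCont s' (SH ∪ ⋃ k, Sk k) := measure_mono claim1
    _ ≤ hCont s' SH + hCont s' (⋃ k, Sk k) := measure_union_le _ _
    _ ≤ κ * (c⁻¹ * cost) + ∑' k, hCont s' (Sk k) :=
      add_le_add claim2 (measure_iUnion_le _)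
    _ ≤ κ * (c⁻¹ * cost) + ∑' k, κ * (c⁻¹ * costk k) :=
      add_le_add_right (ENNReal.tsum_le_tsum claim3) _
    _ = κ * (c⁻¹ * cost) + κ * (c⁻¹ * ∑' k, costk k) := by
      rw [ENNReal.tsum_mul_left, ENNReal.tsum_mul_left]
    _ ≤ κ * (c⁻¹ * cost) + κ * (c⁻¹ * cost) :=
      add_le_add_right (mul_le_mul_right (mul_le_mul_right claim4 _) _) _
    _ = κ * (2 * Z * θ⁻¹ * cost) + κ * (2 * Z * θ⁻¹ * cost) := by rw [hcinv]
    _ = κ * (4 * Z) * θ⁻¹ * cost := by ring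

end
end Stmt5Aux
namespace Stmt5Aux
noncomputable section
open Set MeasureTheory EMetric
open scoped ENNReal

lemma coord_le_dist {m : ℕ} (x y : EuclideanSpace ℝ (Fin m)) (j : Fin m) :
    dist (x j) (y j) ≤ dist x y := by
  rw [EuclideanSpace.dist_eq]
  have h1 : dist (x j) (y j) ^ 2 ≤ ∑ i, dist (x i) (y i) ^ 2 :=
    Finset.single_le_sum (f := fun i => dist (x i) (y i) ^ 2)
      (fun i _ => sq_nonneg _) (Finset.mem_univ j)
  calc dist (x j) (y j) = √(dist (x j) (y j) ^ 2) := (Real.sqrt_sq dist_nonneg).symm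
    _ ≤ √(∑ i, dist (x i) (y i) ^ 2) := Real.sqrt_le_sqrt h1

lemma key (m l : ℕ)
    (C : Set (EuclideanSpace ℝ (Fin m) × EuclideanSpace ℝ (Fin l)))
    (s s' t : ℝ) (hs : 0 < s) (hss : s < s') (ht : 0 < t)
    (hA : ENNReal.ofReal s' < dimH (Prod.fst '' C))
    (hsl : ∀ a ∈ Prod.fst '' C, ENNReal.ofReal t < dimH {b | (a, b) ∈ C}) :
    ENNReal.ofReal (s + t) ≤ dimH C := by
  classical
  have hs' : 0 < s' := hs.trans hss
  set A := Prod.fst '' C with hAdef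
  -- m is positive
  rcases Nat.eq_zero_or_pos m with hm | hm
  · exfalso
    subst hm
    have hsub : A.Subsingleton := by
      intro x _ y _
      ext j
      exact Fin.elim0 j
    rw [dimH_subsingleton hsub] at hA
    exact ENNReal.not_lt_zero hA
  -- the projection has infinite s'-measure
  have hμA : μH[s'] A = ⊤ := by
    have h1 : ((s'.toNNReal : ℝ≥0∞)) < dimH A := hA
    have := hausdorffMeasure_of_lt_dimH h1
    rwa [Real.coe_toNNReal s' hs'.le] at this
  -- slices have positive t-content
  have hcontsl : ∀ a ∈ A, hCont t {b | (a, b) ∈ C} ≠ 0 := by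
    intro a ha h0
    have h1 : ((t.toNNReal : ℝ≥0∞)) < dimH {b | (a, b) ∈ C} := hsl a ha
    have h2 := hausdorffMeasure_of_lt_dimH h1
    rw [Real.coe_toNNReal t ht.le] at h2
    rw [hausdorffMeasure_eq_zero_of_hCont ht h0] at h2
    simp at h2
  -- pigeonhole
  set An : ℕ → Set (EuclideanSpace ℝ (Fin m)) := fun n =>
    {a ∈ A | ((n : ℝ≥0∞))⁻¹ ≤ hCont t {b | (a, b) ∈ C}} with hAn
  have hAcov : A ⊆ ⋃ n, An n := by
    intro a ha
    obtain ⟨n, hn⟩ := ENNReal.exists_inv_nat_lt (hcontsl a ha)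
    exact mem_iUnion.mpr ⟨n, ha, hn.le⟩
  have hex0 : ∃ n, μH[s'] (An n) ≠ 0 := by
    by_contra hall
    push_neg at hall
    have : μH[s'] A ≤ ∑' n, μH[s'] (An n) :=
      (measure_mono hAcov).trans (measure_iUnion_le _)
    rw [tsum_congr hall] at this
    simp [hμA] at this
  obtain ⟨n0, hn0⟩ := hex0
  set γ := hCont s' (An n0) with hγdef
  have hγ : γ ≠ 0 := fun h0 => hn0 (hausdorffMeasure_eq_zero_of_hCont hs' h0)
  set b : ℝ≥0∞ := min ((n0 : ℝ≥0∞))⁻¹ 1 with hbdef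
  have hb0 : b ≠ 0 := by
    simp only [hbdef, ne_eq, min_eq_iff, not_or]
    refine ⟨?_, ?_⟩ <;> simp [ENNReal.inv_ne_zero.mpr (ENNReal.natCast_ne_top n0)]
  have hbt : b ≠ ⊤ := ne_top_of_le_ne_top ENNReal.one_ne_top (min_le_right _ _)
  have hbA : ∀ a ∈ An n0, b ≤ hCont t {y | (a, y) ∈ C} := fun a ha =>
    le_trans (min_le_left _ _) ha.2
  -- the constant
  set κ := (m : ℝ≥0∞) ^ s' with hκdef
  have hκ0 : κ ≠ 0 := by
    simp only [hκdef, ne_eq, ENNReal.rpow_eq_zero_iff, not_or]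
    constructor
    · rintro ⟨h1, _⟩
      exact absurd (Nat.cast_eq_zero.mp h1) hm.ne'
    · rintro ⟨h1, _⟩
      exact absurd h1 (ENNReal.natCast_ne_top m)
  have hκt : κ ≠ ⊤ := by
    simp only [hκdef, ne_eq, ENNReal.rpow_eq_top_iff, not_or]
    constructor
    · rintro ⟨h1, _⟩
      exact absurd (Nat.cast_eq_zero.mp h1) hm.ne'
    · rintro ⟨h1, _⟩
      exact absurd h1 (ENNReal.natCast_ne_top m)
  set Z := Zval (s' - s) with hZdef
  have hσ : 0 < s' - s := by linarith
  have hZ1 : 1 ≤ Z := one_le_Zval hσ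
  have hZt : Z ≠ ⊤ := Zval_ne_top hσ
  have hZ0 : Z ≠ 0 := fun h => by rw [h] at hZ1; simp at hZ1
  set Kc := κ * (4 * Z) * b⁻¹ * ((5:ℝ≥0∞) ^ m) with hKc
  have hKc0 : Kc ≠ 0 := by
    refine mul_ne_zero (mul_ne_zero (mul_ne_zero hκ0 ?_) ?_) ?_
    · exact mul_ne_zero (by norm_num) hZ0
    · exact ENNReal.inv_ne_zero.mpr hbt
    · positivity
  have hKct : Kc ≠ ⊤ := by
    refine ENNReal.mul_ne_top (ENNReal.mul_ne_top (ENNReal.mul_ne_top hκt ?_) ?_) ?_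
    · exact ENNReal.mul_ne_top (by norm_num) hZt
    · exact ENNReal.inv_ne_top.mpr hb0
    · exact ENNReal.pow_ne_top (by norm_num)
  set c2 := γ * Kc⁻¹ with hc2def
  have hc20 : c2 ≠ 0 := mul_ne_zero hγ (ENNReal.inv_ne_zero.mpr hKct)
  -- the covering estimate
  have hμlow : c2 ≤ μH[s + t] C := by
    refine le_hausdorffMeasure_of_covers (by linarith) ?_
    intro U hU hd1
    -- indices with nondegenerate pieces
    set I := {i : ℕ | Metric.ediam (U i) ≠ 0} with hI
    have hne : ∀ i : I, (U (i:ℕ)).Nonempty := by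
      rintro ⟨i, hi⟩
      rcases eq_empty_or_nonempty (U i) with he | he
      · exact absurd (by simp [he]) hi
      · exact he
    have hdfin : ∀ i : I, Metric.ediam (U (i:ℕ)) ≠ ⊤ :=
      fun i => ne_top_of_le_ne_top ENNReal.one_ne_top (hd1 i)
    set pt : I → _ := fun i => (hne i).choose with hpt
    have hptU : ∀ i : I, pt i ∈ U (i:ℕ) := fun i => (hne i).choose_spec
    have exk : ∀ i : I, ∃ k : ℕ, (2:ℝ≥0∞) ^ (-(k:ℝ)) ≤ Metric.ediam (U (i:ℕ)) := by
      rintro ⟨i, hi⟩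
      obtain ⟨n, hn⟩ := ENNReal.exists_inv_two_pow_lt hi
      exact ⟨n, by rw [two_rpow_neg_nat]; exact hn.le⟩
    set kk : I → ℕ := fun i => Nat.find (exk i) with hkk
    have hk1 : ∀ i : I, (2:ℝ≥0∞) ^ (-(kk i:ℝ)) ≤ Metric.ediam (U (i:ℕ)) :=
      fun i => Nat.find_spec (exk i)
    have hk2 : ∀ i : I, Metric.ediam (U (i:ℕ)) ≤ 2 * (2:ℝ≥0∞) ^ (-(kk i:ℝ)) := by
      intro i
      rcases Nat.eq_zero_or_pos (kk i) with h0 | hpos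
      · rw [h0]
        simp only [Nat.cast_zero, neg_zero, ENNReal.rpow_zero, mul_one]
        exact (hd1 i).trans (by norm_num)
      · have hmin := Nat.find_min (exk i) (m := kk i - 1) (Nat.sub_lt hpos one_pos)
        push_neg at hmin
        have hcast : (((kk i - 1 : ℕ)):ℝ) = (kk i:ℝ) - 1 := by
          push_cast [Nat.cast_sub (Nat.one_le_iff_ne_zero.mpr hpos.ne')]
          ring
        rw [hcast] at hmin
        have hrw : (2:ℝ≥0∞) ^ (-((kk i:ℝ) - 1)) = 2 * (2:ℝ≥0∞) ^ (-(kk i:ℝ)) := by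
          rw [show -((kk i:ℝ) - 1) = 1 + -(kk i:ℝ) by ring,
            ENNReal.rpow_add _ _ (by norm_num) (by norm_num), ENNReal.rpow_one]
        rw [← hrw]
        exact hmin.le
    set av : I → EuclideanSpace ℝ (Fin m) := fun i => (pt i).1 with hav
    set Qie : I × (Fin m → Fin 5) → ℕ × (Fin m → ℤ) := fun p =>
      (kk p.1, fun j => fl (kk p.1) (av p.1) j + ((p.2 j : ℕ) : ℤ) - 2) with hQie
    set w : ℕ × (Fin m → ℤ) → ℝ≥0∞ := fun Q =>
      ∑' p : I × (Fin m → Fin 5), if Q = Qie p then Metric.ediam (U ((p.1:ℕ))) ^ t else 0 with hw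
    -- geometry : every point of the projection of `U i` lies in one of the 5^m cubes
    have hgeo : ∀ (i : I) (a : EuclideanSpace ℝ (Fin m)), a ∈ Prod.fst '' (U (i:ℕ)) →
        ∃ e : Fin m → Fin 5, a ∈ cube m (kk i) ((Qie (i, e)).2) := by
      rintro i a ⟨x, hx, rfl⟩
      have hed : edist x.1 (av i) ≤ Metric.ediam (U (i:ℕ)) := by
        refine le_trans ?_ (edist_le_diam_of_mem hx (hptU i))
        rw [Prod.edist_eq]
        exact le_sup_left
      have hedr : edist x.1 (av i) ≤ 2 * (2:ℝ≥0∞) ^ (-(kk i:ℝ)) := hed.trans (hk2 i)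
      have hreal : dist x.1 (av i) ≤ 2 * (2:ℝ)^(-(kk i:ℝ)) := by
        have h2 : (2:ℝ≥0∞) * (2:ℝ≥0∞) ^ (-(kk i:ℝ))
            = ENNReal.ofReal (2 * (2:ℝ)^(-(kk i:ℝ))) := by
          rw [ENNReal.ofReal_mul (by norm_num), ← ENNReal.ofReal_rpow_of_pos (by norm_num)]
          norm_num
        rw [edist_dist, h2] at hedr
        exact (ENNReal.ofReal_le_ofReal_iff (by positivity)).mp hedr
      have hfl : ∀ j, fl (kk i) (av i) j - 2 ≤ fl (kk i) x.1 j ∧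
          fl (kk i) x.1 j ≤ fl (kk i) (av i) j + 2 := by
        intro j
        have hcd : |x.1 j - av i j| ≤ 2 * (2:ℝ)^(-(kk i:ℝ)) := by
          have h := coord_le_dist x.1 (av i) j
          rw [Real.dist_eq] at h
          exact h.trans hreal
        have h2k : (0:ℝ) < 2 ^ (kk i) := by positivity
        have hprod : |2 ^ (kk i) * x.1 j - 2 ^ (kk i) * av i j| ≤ 2 := by
          rw [← mul_sub, abs_mul, abs_of_pos h2k]
          have hrw : (2:ℝ) ^ (kk i) * (2 * (2:ℝ)^(-(kk i:ℝ))) = 2 := by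
            rw [Real.rpow_neg (by norm_num), Real.rpow_natCast]
            field_simp
          calc (2:ℝ) ^ (kk i) * |x.1 j - av i j|
              ≤ (2:ℝ) ^ (kk i) * (2 * (2:ℝ)^(-(kk i:ℝ))) :=
                mul_le_mul_of_nonneg_left hcd h2k.le
            _ = 2 := hrw
        rw [abs_le] at hprod
        have hfav : fl (kk i) (av i) j = ⌊(2:ℝ) ^ (kk i) * av i j⌋ := rfl
        have hfx : fl (kk i) x.1 j = ⌊(2:ℝ) ^ (kk i) * x.1 j⌋ := rfl
        constructor
        · have hle : (2:ℝ) ^ (kk i) * av i j + ((-2:ℤ):ℝ) ≤ (2:ℝ) ^ (kk i) * x.1 j := by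
            push_cast
            linarith [hprod.1]
          have h1 := Int.floor_le_floor hle
          rw [Int.floor_add_intCast] at h1
          rw [hfav, hfx]
          omega
        · have hle : (2:ℝ) ^ (kk i) * x.1 j ≤ (2:ℝ) ^ (kk i) * av i j + ((2:ℤ):ℝ) := by
            push_cast
            linarith [hprod.2]
          have h1 := Int.floor_le_floor hle
          rw [Int.floor_add_intCast] at h1
          rw [hfav, hfx]
          omega
      refine ⟨fun j => ⟨(fl (kk i) x.1 j - fl (kk i) (av i) j + 2).toNat, by
        have h1 := (hfl j).1
        have h2 := (hfl j).2
        omega⟩, ?_⟩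
      rw [mem_cube_iff]
      funext j
      simp only [hQie]
      have h1 := (hfl j).1
      have hnn : (0:ℤ) ≤ fl (kk i) x.1 j - fl (kk i) (av i) j + 2 := by omega
      push_cast [Int.toNat_of_nonneg hnn]
      ring
    -- branch sums dominate the slice contents
    have hbr : ∀ a ∈ An n0, b ≤ ∑' j : ℕ, w (j, fl j a) := by
      intro a ha
      set V : ℕ → Set (EuclideanSpace ℝ (Fin l)) := fun i =>
        if a ∈ Prod.fst '' (U i) then Prod.snd '' (U i) else ∅ with hV
      have hVcov : {y | (a, y) ∈ C} ⊆ ⋃ i, V i := by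
        intro y hy
        obtain ⟨i, hi⟩ := mem_iUnion.mp (hU hy)
        refine mem_iUnion.mpr ⟨i, ?_⟩
        have hmem : a ∈ Prod.fst '' (U i) := ⟨(a, y), hi, rfl⟩
        rw [hV]
        simp only [hmem, if_true]
        exact ⟨(a, y), hi, rfl⟩
      have hstep1 : b ≤ ∑' i : ℕ, Metric.ediam (V i) ^ t :=
        (hbA a ha).trans (hCont_le_tsum t _ V hVcov)
      set g : ℕ → ℝ≥0∞ := fun i =>
        if a ∈ Prod.fst '' (U i) then Metric.ediam (U i) ^ t else 0 with hg
      have hstep2 : ∀ i : ℕ, Metric.ediam (V i) ^ t ≤ g i := by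
        intro i
        rw [hV, hg]
        by_cases hmem : a ∈ Prod.fst '' (U i)
        · simp only [hmem, if_true]
          refine ENNReal.rpow_le_rpow ?_ ht.le
          simpa using LipschitzWith.prod_snd.ediam_image_le (U i)
        · simp [hmem, diam_empty, ENNReal.zero_rpow_of_pos ht]
      have hstep3 : b ≤ ∑' i : I, g (i:ℕ) := by
        have hsupp : Function.support g ⊆ I := by
          intro i hi
          simp only [Function.mem_support, hg] at hi
          simp only [hI, mem_setOf_eq]
          intro hdi
          apply hi
          by_cases hmem : a ∈ Prod.fst '' (U i) <;>
            simp [hmem, hdi, ENNReal.zero_rpow_of_pos ht]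
        rw [tsum_subtype_eq_of_support_subset hsupp]
        exact hstep1.trans (ENNReal.tsum_le_tsum hstep2)
      have hstep4 : ∀ i : I, g (i:ℕ) ≤ ∑' e : Fin m → Fin 5,
          if a ∈ cube m (kk i) ((Qie (i, e)).2) then Metric.ediam (U (i:ℕ)) ^ t else 0 := by
        intro i
        rw [hg]
        by_cases hmem : a ∈ Prod.fst '' (U (i:ℕ))
        · obtain ⟨e0, he0⟩ := hgeo i a hmem
          simp only [hmem, if_true]
          refine le_trans ?_ (ENNReal.le_tsum e0)
          simp [he0]
        · simp [hmem]
      have hstep5 : b ≤ ∑' p : I × (Fin m → Fin 5),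
          if a ∈ cube m (kk p.1) ((Qie p).2) then Metric.ediam (U ((p.1:ℕ))) ^ t else 0 := by
        rw [ENNReal.tsum_prod' (f := fun p : ↑I × (Fin m → Fin 5) =>
          if a ∈ cube m (kk p.1) ((Qie p).2) then Metric.ediam (U ((p.1:ℕ))) ^ t else 0)]
        exact hstep3.trans (ENNReal.tsum_le_tsum hstep4)
      have hstep6 : ∑' p : I × (Fin m → Fin 5),
          (if a ∈ cube m (kk p.1) ((Qie p).2) then Metric.ediam (U ((p.1:ℕ))) ^ t else 0)
          = ∑' j : ℕ, w (j, fl j a) := by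
        have hrhs : ∑' j : ℕ, w (j, fl j a) = ∑' p : I × (Fin m → Fin 5), ∑' j : ℕ,
            (if ((j, fl j a) : ℕ × (Fin m → ℤ)) = Qie p
              then Metric.ediam (U ((p.1:ℕ))) ^ t else 0) := by
          calc ∑' j : ℕ, w (j, fl j a)
              = ∑' j : ℕ, ∑' p : I × (Fin m → Fin 5),
                (if ((j, fl j a) : ℕ × (Fin m → ℤ)) = Qie p
                  then Metric.ediam (U ((p.1:ℕ))) ^ t else 0) := rfl
            _ = _ := ENNReal.tsum_comm
        rw [hrhs]
        refine (tsum_congr fun p => ?_).symm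
        by_cases hmem : a ∈ cube m (kk p.1) ((Qie p).2)
        · have hz : (Qie p).2 = fl (kk p.1) a := mem_cube_iff.mp hmem
          have hzero : ∀ j : ℕ, j ≠ kk p.1 →
              (if ((j, fl j a) : ℕ × (Fin m → ℤ)) = Qie p
                then Metric.ediam (U ((p.1:ℕ))) ^ t else 0) = 0 := by
            intro j hj
            rw [if_neg]
            intro hcontra
            exact hj (congrArg Prod.fst hcontra)
          rw [tsum_eq_single (kk p.1) hzero]
          have heq : ((kk p.1, fl (kk p.1) a) : ℕ × (Fin m → ℤ)) = Qie p := by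
            rw [Prod.ext_iff]
            exact ⟨rfl, hz.symm⟩
          simp [heq, hmem]
        · have hzero : ∀ j : ℕ,
              (if ((j, fl j a) : ℕ × (Fin m → ℤ)) = Qie p
                then Metric.ediam (U ((p.1:ℕ))) ^ t else 0) = 0 := by
            intro j
            rw [if_neg]
            intro hcontra
            have h1 : j = kk p.1 := congrArg Prod.fst hcontra
            have h2 : (Qie p).2 = fl (kk p.1) a := by
              have := congrArg Prod.snd hcontra
              rw [← this, ← h1]
            exact hmem (mem_cube_iff.mpr h2)
          rw [tsum_congr hzero]
          simp [hmem]
      rw [← hstep6]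
      exact hstep5
    -- apply the weighted covering lemma
    have hmain := lemmaW m s s' hs.le hss (An n0) w b hb0 hbt hbr
    -- bound the cost of the weights
    have hcostb : (∑' Q : ℕ × (Fin m → ℤ), w Q * (2:ℝ≥0∞) ^ (-((Q.1:ℝ)) * s))
        ≤ (5:ℝ≥0∞) ^ m * ∑' n : ℕ, Metric.ediam (U n) ^ (s + t) := by
      have h1 : ∀ Q : ℕ × (Fin m → ℤ), w Q * (2:ℝ≥0∞) ^ (-((Q.1:ℝ)) * s)
          = ∑' p : I × (Fin m → Fin 5), if Q = Qie p
              then Metric.ediam (U ((p.1:ℕ))) ^ t * (2:ℝ≥0∞) ^ (-((Q.1:ℝ)) * s) else 0 := by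
        intro Q
        calc w Q * (2:ℝ≥0∞) ^ (-((Q.1:ℝ)) * s)
            = (∑' p : I × (Fin m → Fin 5), if Q = Qie p then Metric.ediam (U ((p.1:ℕ))) ^ t else 0)
                * (2:ℝ≥0∞) ^ (-((Q.1:ℝ)) * s) := rfl
          _ = ∑' p : I × (Fin m → Fin 5), (if Q = Qie p then Metric.ediam (U ((p.1:ℕ))) ^ t else 0)
                * (2:ℝ≥0∞) ^ (-((Q.1:ℝ)) * s) := ENNReal.tsum_mul_right.symm
          _ = ∑' p : I × (Fin m → Fin 5), (if Q = Qie p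
                then Metric.ediam (U ((p.1:ℕ))) ^ t * (2:ℝ≥0∞) ^ (-((Q.1:ℝ)) * s) else 0) :=
              tsum_congr fun p => by by_cases h : Q = Qie p <;> simp [h]
      calc (∑' Q : ℕ × (Fin m → ℤ), w Q * (2:ℝ≥0∞) ^ (-((Q.1:ℝ)) * s))
          = ∑' Q : ℕ × (Fin m → ℤ), ∑' p : I × (Fin m → Fin 5), if Q = Qie p
              then Metric.ediam (U ((p.1:ℕ))) ^ t * (2:ℝ≥0∞) ^ (-((Q.1:ℝ)) * s) else 0 :=
            tsum_congr h1
        _ = ∑' p : I × (Fin m → Fin 5), ∑' Q : ℕ × (Fin m → ℤ), if Q = Qie p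
              then Metric.ediam (U ((p.1:ℕ))) ^ t * (2:ℝ≥0∞) ^ (-((Q.1:ℝ)) * s) else 0 :=
            ENNReal.tsum_comm
        _ = ∑' p : I × (Fin m → Fin 5),
              Metric.ediam (U ((p.1:ℕ))) ^ t * (2:ℝ≥0∞) ^ (-((kk p.1:ℝ)) * s) := by
            refine tsum_congr fun p => ?_
            have hzero : ∀ Q : ℕ × (Fin m → ℤ), Q ≠ Qie p →
                (if Q = Qie p
                  then Metric.ediam (U ((p.1:ℕ))) ^ t * (2:ℝ≥0∞) ^ (-((Q.1:ℝ)) * s) else 0) = 0 :=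
              fun Q hQ => if_neg hQ
            rw [tsum_eq_single (Qie p) hzero]
            simp [hQie]
        _ ≤ ∑' p : I × (Fin m → Fin 5), Metric.ediam (U ((p.1:ℕ))) ^ (s + t) := by
            refine ENNReal.tsum_le_tsum fun p => ?_
            have h2 : (2:ℝ≥0∞) ^ (-((kk p.1:ℝ)) * s) ≤ Metric.ediam (U ((p.1:ℕ))) ^ s := by
              rw [ENNReal.rpow_mul]
              exact ENNReal.rpow_le_rpow (hk1 p.1) hs.le
            calc Metric.ediam (U ((p.1:ℕ))) ^ t * (2:ℝ≥0∞) ^ (-((kk p.1:ℝ)) * s)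
                ≤ Metric.ediam (U ((p.1:ℕ))) ^ t * Metric.ediam (U ((p.1:ℕ))) ^ s :=
                  mul_le_mul_right h2 _
              _ = Metric.ediam (U ((p.1:ℕ))) ^ (s + t) := by
                  rw [← ENNReal.rpow_add _ _ (p.1).2 (hdfin p.1)]
                  ring_nf
        _ = ∑' i : I, ∑' _e : Fin m → Fin 5, Metric.ediam (U ((i:ℕ))) ^ (s + t) :=
            ENNReal.tsum_prod' (f := fun p : ↑I × (Fin m → Fin 5) =>
              Metric.ediam (U ((p.1:ℕ))) ^ (s + t))
        _ = ∑' i : I, (5:ℝ≥0∞) ^ m * Metric.ediam (U ((i:ℕ))) ^ (s + t) := by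
            refine tsum_congr fun i => ?_
            rw [tsum_fintype]
            rw [Finset.sum_const]
            rw [nsmul_eq_mul]
            congr 1
            simp [Fintype.card_fun]
        _ = (5:ℝ≥0∞) ^ m * ∑' i : I, Metric.ediam (U ((i:ℕ))) ^ (s + t) :=
            ENNReal.tsum_mul_left
        _ ≤ (5:ℝ≥0∞) ^ m * ∑' n : ℕ, Metric.ediam (U n) ^ (s + t) := by
            refine mul_le_mul_right ?_ _
            have heq := tsum_subtype I (fun n => Metric.ediam (U n) ^ (s + t))
            rw [heq]
            exact ENNReal.tsum_le_tsum fun n => Set.indicator_le_self _ _ n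
    -- put everything together
    have hchain : γ ≤ Kc * ∑' n : ℕ, Metric.ediam (U n) ^ (s + t) := by
      calc γ ≤ (m : ℝ≥0∞) ^ s' * (4 * Zval (s' - s)) * b⁻¹ *
            ∑' Q : ℕ × (Fin m → ℤ), w Q * (2:ℝ≥0∞) ^ (-((Q.1:ℝ)) * s) := hmain
        _ ≤ (m : ℝ≥0∞) ^ s' * (4 * Zval (s' - s)) * b⁻¹ *
            ((5:ℝ≥0∞) ^ m * ∑' n : ℕ, Metric.ediam (U n) ^ (s + t)) :=
          mul_le_mul_right hcostb _
        _ = Kc * ∑' n : ℕ, Metric.ediam (U n) ^ (s + t) := by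
          rw [hKc, hκdef, hZdef]
          ring
    calc c2 = γ * Kc⁻¹ := rfl
      _ ≤ Kc * (∑' n : ℕ, Metric.ediam (U n) ^ (s + t)) * Kc⁻¹ := mul_le_mul_left hchain _
      _ = (∑' n : ℕ, Metric.ediam (U n) ^ (s + t)) * (Kc * Kc⁻¹) := by ring
      _ = ∑' n : ℕ, Metric.ediam (U n) ^ (s + t) := by
        rw [ENNReal.mul_inv_cancel hKc0 hKct, mul_one]
  -- conclusion
  have hne : μH[s + t] C ≠ 0 := by
    intro h0
    rw [h0] at hμlow
    exact hc20 (le_zero_iff.mp hμlow)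
  have hfin : ((((s+t).toNNReal) : ℝ≥0∞)) ≤ dimH C := by
    refine le_dimH_of_hausdorffMeasure_ne_zero ?_
    rwa [Real.coe_toNNReal (s+t) (by linarith)]
  exact hfin

end
end Stmt5Aux

open scoped ENNReal
open Set Stmt5Aux

/-- **Marstrand slicing theorem.** If `C ⊆ ℝ^m × ℝ^l`, the projection of `C`
to the first factor has Hausdorff dimension at least `α > 0`, and every slice of `C` over a
point of the projection has Hausdorff dimension at least `β > 0`, then
`dim_H C ≥ α + β`. -/
theorem stmt_5 (m l : ℕ)
    (C : Set (EuclideanSpace ℝ (Fin m) × EuclideanSpace ℝ (Fin l)))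
    (α β : ℝ) (hα : 0 < α) (hβ : 0 < β)
    (hproj : ENNReal.ofReal α ≤ dimH (Prod.fst '' C))
    (hslice : ∀ a ∈ Prod.fst '' C, ENNReal.ofReal β ≤ dimH {b | (a, b) ∈ C}) :
    ENNReal.ofReal (α + β) ≤ dimH C := by
  classical
  by_contra hcon
  push_neg at hcon
  have hAne : (Prod.fst '' C).Nonempty := by
    rcases eq_empty_or_nonempty (Prod.fst '' C) with he | he
    · rw [he, dimH_empty] at hproj
      exact absurd hproj (not_le.mpr (ENNReal.ofReal_pos.mpr hα))
    · exact he
  obtain ⟨r, hr1, hr2⟩ := ENNReal.lt_iff_exists_nnreal_btwn.mp hcon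
  have hrlt : (r:ℝ) < α + β := by
    rw [← ENNReal.ofReal_coe_nnreal] at hr2
    exact (ENNReal.ofReal_lt_ofReal_iff (by linarith)).mp hr2
  have hXpos : 0 < min (min α β) (α + β - (r:ℝ)) :=
    lt_min (lt_min hα hβ) (by linarith)
  set δ := min (min α β) (α + β - (r:ℝ)) / 2 with hδdef
  have hδpos : 0 < δ := by positivity
  have hδβ : 2 * δ ≤ β := by
    have h1 : min (min α β) (α + β - (r:ℝ)) ≤ β := ((min_le_left _ _).trans (min_le_right _ _))
    rw [hδdef]; linarith
  have hδα : 2 * δ ≤ α := by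
    have h1 : min (min α β) (α + β - (r:ℝ)) ≤ α := ((min_le_left _ _).trans (min_le_left _ _))
    rw [hδdef]; linarith
  have hδr : 2 * δ ≤ α + β - (r:ℝ) := by
    have h1 := min_le_right (min α β) (α + β - (r:ℝ))
    rw [hδdef]; linarith
  set t := β - δ with htdef
  have ht : 0 < t := by rw [htdef]; linarith
  have htβ : t < β := by rw [htdef]; linarith
  by_cases hcase : (r:ℝ) ≤ t
  · obtain ⟨a, ha⟩ := hAne
    have hiso : Isometry (fun y : EuclideanSpace ℝ (Fin l) =>
        ((a, y) : EuclideanSpace ℝ (Fin m) × EuclideanSpace ℝ (Fin l))) := by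
      intro y y'
      simp [Prod.edist_eq]
    have himg : (fun y : EuclideanSpace ℝ (Fin l) =>
        ((a, y) : EuclideanSpace ℝ (Fin m) × EuclideanSpace ℝ (Fin l))) '' {b | (a, b) ∈ C}
          ⊆ C := by
      rintro _ ⟨y, hy, rfl⟩
      exact hy
    have hd1 : ENNReal.ofReal β ≤ dimH C := by
      refine le_trans (hslice a ha) ?_
      calc dimH {b | (a, b) ∈ C}
          = dimH ((fun y : EuclideanSpace ℝ (Fin l) =>
              ((a, y) : EuclideanSpace ℝ (Fin m) × EuclideanSpace ℝ (Fin l)))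
              '' {b | (a, b) ∈ C}) := (hiso.dimH_image _).symm
        _ ≤ dimH C := dimH_mono himg
    have hle : (r : ℝ≥0∞) ≤ ENNReal.ofReal β := by
      rw [← ENNReal.ofReal_coe_nnreal]
      exact ENNReal.ofReal_le_ofReal (by linarith)
    exact absurd (hle.trans hd1) (not_le.mpr hr1)
  · push_neg at hcase
    set s := (r:ℝ) - t with hsdef
    have hs : 0 < s := by rw [hsdef]; linarith
    set s' := α - δ/2 with hs'def
    have hss : s < s' := by
      rw [hsdef, hs'def, htdef]
      linarith
    have hsl' : ∀ a ∈ Prod.fst '' C, ENNReal.ofReal t < dimH {b | (a, b) ∈ C} :=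
      fun a ha => lt_of_lt_of_le ((ENNReal.ofReal_lt_ofReal_iff hβ).mpr htβ) (hslice a ha)
    have hA' : ENNReal.ofReal s' < dimH (Prod.fst '' C) :=
      lt_of_lt_of_le ((ENNReal.ofReal_lt_ofReal_iff hα).mpr (by rw [hs'def]; linarith)) hproj
    have hkey := Stmt5Aux.key m l C s s' t hs hss ht hA' hsl'
    have hfin : (r : ℝ≥0∞) ≤ dimH C := by
      rw [← ENNReal.ofReal_coe_nnreal]
      have hst : s + t = (r:ℝ) := by rw [hsdef]; ring
      rw [← hst]
      exact hkey
    exact absurd hfin (not_le.mpr hr1)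
end

section
/- Let (ℬ, J, ϱ) be an indexed self-similar covering of a subset E ⊆ ℝ^l, and suppose there exists s > 0 such that for every α ∈ J one has Σ_{α' ∈ ϱ(α)} (diam B(α'))^s ≤ (diam B(α))^s. Then dim_H(E) ≤ s. -/
open scoped ENNReal

open Classical in
/-- The set of indices reachable from `α` in at most `n` steps that are the first in their
chain to have diameter `< δ`. -/
noncomputable def ssCut {J : Type} (dm : J → ℝ) (ϱ : J → Set J) (δ : ℝ) : ℕ → J → Set J
  | 0, α => if dm α < δ then {α} else ∅
  | (n+1), α => if dm α < δ then {α} else ⋃ β ∈ ϱ α, ssCut dm ϱ δ n β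

open Classical in
lemma ssCut_small {J : Type} (dm : J → ℝ) (ϱ : J → Set J) (δ : ℝ) :
    ∀ (n : ℕ) (α γ : J), γ ∈ ssCut dm ϱ δ n α → dm γ < δ := by
  intro n
  induction n with
  | zero =>
    intro α γ hγ
    simp only [ssCut] at hγ
    split at hγ
    · rcases hγ with rfl; assumption
    · exact absurd hγ (Set.notMem_empty _)
  | succ n ih =>
    intro α γ hγ
    simp only [ssCut] at hγ
    split at hγ
    · rcases hγ with rfl; assumption
    · rcases Set.mem_iUnion₂.1 hγ with ⟨β, _, hβ⟩
      exact ih β γ hβ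

open Classical in
lemma ssCut_sum {J : Type} (dm : J → ℝ) (ϱ : J → Set J) (δ : ℝ) (f : J → ℝ≥0∞)
    (hf : ∀ a : J, ∑' b : (ϱ a), f (b : J) ≤ f a) :
    ∀ (n : ℕ) (α : J), ∑' γ : (ssCut dm ϱ δ n α), f (γ : J) ≤ f α := by
  intro n
  induction n with
  | zero =>
    intro α
    by_cases h : dm α < δ
    · simp only [ssCut]
      rw [if_pos h, tsum_singleton]
    · simp only [ssCut]
      rw [if_neg h]
      simp
  | succ n ih =>
    intro α
    by_cases h : dm α < δ
    · simp only [ssCut]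
      rw [if_pos h, tsum_singleton]
    · simp only [ssCut]
      rw [if_neg h]
      calc ∑' γ : (⋃ β ∈ ϱ α, ssCut dm ϱ δ n β), f (γ : J)
          ≤ ∑' β : (ϱ α), ∑' γ : (ssCut dm ϱ δ n (β : J)), f (γ : J) :=
            ENNReal.tsum_biUnion_le_tsum f (ϱ α) _
        _ ≤ ∑' β : (ϱ α), f (β : J) := ENNReal.tsum_le_tsum fun β => ih (β : J)
        _ ≤ f α := hf α

open Classical in
lemma ssCut_reach {J : Type} (dm : J → ℝ) (ϱ : J → Set J) (δ : ℝ) :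
    ∀ (n : ℕ) (a : ℕ → J), (∀ j, a (j + 1) ∈ ϱ (a j)) → dm (a n) < δ →
      ∃ k ≤ n, a k ∈ ssCut dm ϱ δ n (a 0) := by
  intro n
  induction n with
  | zero =>
    intro a _ h0
    exact ⟨0, le_rfl, by simp [ssCut, h0]⟩
  | succ n ih =>
    intro a ha hn
    by_cases h0 : dm (a 0) < δ
    · exact ⟨0, Nat.zero_le _, by simp [ssCut, h0]⟩
    · obtain ⟨k, hk, hmem⟩ := ih (fun j => a (j + 1)) (fun j => ha (j + 1)) hn
      refine ⟨k + 1, Nat.succ_le_succ hk, ?_⟩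
      simp only [ssCut, if_neg h0]
      exact Set.mem_iUnion₂.2 ⟨a 1, ha 0, hmem⟩

/-- If `(ℬ, J, ϱ)` is an indexed self-similar covering of `E ⊆ ℝ^l` and
there is an `s > 0` with `∑_{α' ∈ ϱ(α)} (diam B(α'))^s ≤ (diam B(α))^s` for every `α ∈ J`,
then `dim_H E ≤ s`. -/
theorem stmt_6 (l : ℕ) (E : Set (EuclideanSpace ℝ (Fin l)))
    (J : Type) [Countable J]
    (B : J → Set (EuclideanSpace ℝ (Fin l)))
    (hBbdd : ∀ a : J, Bornology.IsBounded (B a))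
    (hBne : ∀ a : J, (B a).Nonempty)
    (hcov : E ⊆ ⋃ a : J, B a)
    (ϱ : J → Set J) (hϱ : ∀ a : J, (ϱ a).Nonempty)
    (lam : ℝ) (hlam0 : 0 < lam) (hlam1 : lam < 1)
    (hss : ∀ x ∈ E, ∃ a : ℕ → J,
      (⋂ j : ℕ, B (a j)) = {x} ∧
      (∀ j : ℕ, Metric.diam (B (a (j + 1))) < lam * Metric.diam (B (a j))) ∧
      (∀ j : ℕ, a (j + 1) ∈ ϱ (a j)))
    (s : ℝ) (hs : 0 < s)
    (hsum : ∀ a : J, ∑' b : (ϱ a), ENNReal.ofReal (Metric.diam (B (b : J)) ^ s)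
        ≤ ENNReal.ofReal (Metric.diam (B a) ^ s)) :
    dimH E ≤ ENNReal.ofReal s := by
  classical
  -- choose a sequence for each point of `E`
  have hss' : ∀ x : E, ∃ a : ℕ → J,
      (⋂ j : ℕ, B (a j)) = {(x : EuclideanSpace ℝ (Fin l))} ∧
      (∀ j : ℕ, Metric.diam (B (a (j + 1))) < lam * Metric.diam (B (a j))) ∧
      (∀ j : ℕ, a (j + 1) ∈ ϱ (a j)) := fun x => hss x x.2
  choose g hg1 hg2 hg3 using hss'
  set dm : J → ℝ := fun α => Metric.diam (B α) with hdm
  set f : J → ℝ≥0∞ := fun α => ENNReal.ofReal (dm α ^ s) with hfdef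
  -- the root classes
  set S : J → Set (EuclideanSpace ℝ (Fin l)) :=
    fun r => {y | ∃ h : y ∈ E, g ⟨y, h⟩ 0 = r} with hS
  have hEsub : E ⊆ ⋃ r : J, S r := fun y hy =>
    Set.mem_iUnion.2 ⟨g ⟨y, hy⟩ 0, hy, rfl⟩
  -- membership in all sets along the chosen sequence
  have hmemB : ∀ (x : E) (j : ℕ), (x : EuclideanSpace ℝ (Fin l)) ∈ B (g x j) := by
    intro x j
    have : (x : EuclideanSpace ℝ (Fin l)) ∈ ⋂ j : ℕ, B (g x j) := by
      rw [hg1 x]; exact Set.mem_singleton _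
    exact Set.mem_iInter.1 this j
  -- geometric decay along the sequence
  have hdecay : ∀ (x : E) (j : ℕ), dm (g x j) ≤ lam ^ j * dm (g x 0) := by
    intro x j
    induction j with
    | zero => simp
    | succ j ih =>
      calc dm (g x (j + 1)) ≤ lam * dm (g x j) := (hg2 x j).le
        _ ≤ lam * (lam ^ j * dm (g x 0)) := by
            exact mul_le_mul_of_nonneg_left ih hlam0.le
        _ = lam ^ (j + 1) * dm (g x 0) := by ring
  have hdiam_nonneg : ∀ α : J, 0 ≤ dm α := fun α => Metric.diam_nonneg
  -- the key bound for each root class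
  have key : ∀ r : J, dimH (S r) ≤ ENNReal.ofReal s := by
    intro r
    have hsc : (ENNReal.ofReal s : ℝ≥0∞) = (s.toNNReal : ℝ≥0∞) := rfl
    rw [hsc]
    refine dimH_le_of_hausdorffMeasure_ne_top (s := S r) (d := s.toNNReal) ?_
    have hds : ((s.toNNReal) : ℝ) = s := Real.coe_toNNReal s hs.le
    -- the covers
    set δ : ℕ → ℝ := fun n => lam ^ n * (dm r + 1) with hδ
    have hδpos : ∀ n, 0 < δ n :=
      fun n => mul_pos (pow_pos hlam0 n) (by linarith [hdiam_nonneg r])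
    have hδ0 : Filter.Tendsto (fun n => ENNReal.ofReal (δ n)) Filter.atTop (nhds 0) := by
      have h1 : Filter.Tendsto δ Filter.atTop (nhds 0) := by
        have := (tendsto_pow_atTop_nhds_zero_of_lt_one hlam0.le hlam1).mul_const (dm r + 1)
        simpa using this
      have := (ENNReal.continuous_ofReal.tendsto 0).comp h1
      rw [ENNReal.ofReal_zero] at this; exact this
    set t : ∀ n : ℕ, (ssCut dm ϱ (δ n) n r : Set J) → Set (EuclideanSpace ℝ (Fin l)) :=
      fun n γ => B (γ : J) with ht
    have hcover : ∀ n : ℕ, S r ⊆ ⋃ γ, t n γ := by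
      intro n y hy
      obtain ⟨hyE, hroot⟩ := hy
      set x : E := ⟨y, hyE⟩ with hx
      have hsmall : dm (g x n) < δ n := by
        calc dm (g x n) ≤ lam ^ n * dm (g x 0) := hdecay x n
          _ = lam ^ n * dm r := by rw [hroot]
          _ < lam ^ n * (dm r + 1) := by
              exact mul_lt_mul_of_pos_left (by linarith) (pow_pos hlam0 n)
      obtain ⟨k, hk, hmem⟩ := ssCut_reach dm ϱ (δ n) n (g x) (hg3 x) hsmall
      rw [hroot] at hmem
      exact Set.mem_iUnion.2 ⟨⟨g x k, hmem⟩, hmemB x k⟩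
    have hdiam_le : ∀ n : ℕ, ∀ γ : ↥(ssCut dm ϱ (δ n) n r),
        EMetric.diam (t n γ) ≤ ENNReal.ofReal (δ n) := by
      intro n γ
      have hγ : dm (γ : J) < δ n := ssCut_small dm ϱ (δ n) n r (γ : J) γ.2
      have hb : EMetric.diam (B (γ : J)) = ENNReal.ofReal (dm (γ : J)) :=
        (ENNReal.ofReal_toReal (hBbdd (γ : J)).ediam_ne_top).symm
      rw [ht, hb]
      exact ENNReal.ofReal_le_ofReal hγ.le
    have hμ := MeasureTheory.Measure.hausdorffMeasure_le_liminf_tsum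
      (↑s.toNNReal : ℝ) (S r) (fun n => ENNReal.ofReal (δ n)) hδ0 t
      (Filter.Eventually.of_forall hdiam_le) (Filter.Eventually.of_forall hcover)
    -- bound each term of the liminf
    have hterm : ∀ n : ℕ, (∑' γ : (ssCut dm ϱ (δ n) n r : Set J),
        EMetric.diam (t n γ) ^ (↑s.toNNReal : ℝ)) ≤ f r := by
      intro n
      have heq : ∀ γ : (ssCut dm ϱ (δ n) n r : Set J),
          EMetric.diam (t n γ) ^ (↑s.toNNReal : ℝ) = f (γ : J) := by
        intro γ
        have hb : EMetric.diam (B (γ : J)) = ENNReal.ofReal (dm (γ : J)) :=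
          (ENNReal.ofReal_toReal (hBbdd (γ : J)).ediam_ne_top).symm
        rw [ht, hb, hds, ENNReal.ofReal_rpow_of_nonneg (hdiam_nonneg _) hs.le, hfdef]
      calc (∑' γ : (ssCut dm ϱ (δ n) n r : Set J), EMetric.diam (t n γ) ^ (↑s.toNNReal : ℝ))
          = ∑' γ : (ssCut dm ϱ (δ n) n r : Set J), f (γ : J) := tsum_congr heq
        _ ≤ f r := ssCut_sum dm ϱ (δ n) f hsum n r
    have hliminf : Filter.liminf (fun n => ∑' γ : (ssCut dm ϱ (δ n) n r : Set J),
        EMetric.diam (t n γ) ^ (↑s.toNNReal : ℝ)) Filter.atTop ≤ f r := by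
      refine le_trans (Filter.liminf_le_liminf (Filter.Eventually.of_forall hterm)) ?_
      simp [Filter.liminf_const]
    exact ne_top_of_le_ne_top (by simp [hfdef]) (hμ.trans hliminf)
  calc dimH E ≤ dimH (⋃ r : J, S r) := dimH_mono hEsub
    _ = ⨆ r : J, dimH (S r) := dimH_iUnion S
    _ ≤ ENNReal.ofReal s := iSup_le key
end

section
/- Let d ≥ 1, c > 0, X ≥ 1 and ρ > 0. Let B be a closed Euclidean ball of radius ρ in ℝ^d, let S ⊆ B be a finite set, and let h : S → ℝ satisfy 1 ≤ h(a) ≤ X for every a ∈ S. Assume the separation condition: for all distinct a, b ∈ S, dist(a,b) ≥ c / √(h(a)·h(b)). Then Σ_{a ∈ S} h(a)^{−d/2} ≤ (2/c)^d · (ρ + c/2)^d · X^{d/2}. -/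
open MeasureTheory Metric Real Finset


/-- Packing estimate: if `S` is a finite set of points in a closed ball of
radius `ρ` in `ℝ^d`, equipped with heights `1 ≤ h a ≤ X`, and any two distinct points of `S`
satisfy `dist a b ≥ c / √(h a · h b)`, then `∑_{a ∈ S} h(a)^{-d/2} ≤ (2/c)^d (ρ + c/2)^d X^{d/2}`. -/
theorem stmt_7 (d : ℕ) (hd : 1 ≤ d) (c X ρ : ℝ) (hc : 0 < c) (hX : 1 ≤ X) (hρ : 0 < ρ)
    (x₀ : EuclideanSpace ℝ (Fin d)) (S : Finset (EuclideanSpace ℝ (Fin d)))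
    (hS : ∀ a ∈ S, a ∈ Metric.closedBall x₀ ρ)
    (h : EuclideanSpace ℝ (Fin d) → ℝ)
    (hh1 : ∀ a ∈ S, 1 ≤ h a) (hhX : ∀ a ∈ S, h a ≤ X)
    (hsep : ∀ a ∈ S, ∀ b ∈ S, a ≠ b → c / Real.sqrt (h a * h b) ≤ dist a b) :
    ∑ a ∈ S, h a ^ (-(d : ℝ) / 2) ≤ (2 / c) ^ d * (ρ + c / 2) ^ d * X ^ ((d : ℝ) / 2) := by
  have hX0 : (0:ℝ) < X := lt_of_lt_of_le one_pos hX
  set r : EuclideanSpace ℝ (Fin d) → ℝ := fun a => c / (2 * Real.sqrt (X * h a)) with hrdef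
  have hsq1 : ∀ a ∈ S, 1 ≤ Real.sqrt (X * h a) := by
    intro a ha
    rw [show (1:ℝ) = Real.sqrt 1 by simp]
    exact Real.sqrt_le_sqrt (by nlinarith [hh1 a ha])
  have hrpos : ∀ a ∈ S, 0 < r a := by
    intro a ha
    exact div_pos hc (by nlinarith [hsq1 a ha])
  have hrle : ∀ a ∈ S, r a ≤ c / 2 := by
    intro a ha
    apply div_le_div_of_nonneg_left hc.le (by norm_num)
    nlinarith [hsq1 a ha]
  -- disjointness
  have hdisj : (↑S : Set (EuclideanSpace ℝ (Fin d))).Pairwise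
      (fun a b => Disjoint (ball a (r a)) (ball b (r b))) := by
    intro a ha b hb hab
    simp only [Finset.mem_coe] at ha hb
    have hsum : r a + r b ≤ c / Real.sqrt (h a * h b) := by
      have h1 : Real.sqrt (h a * h b) ≤ Real.sqrt (X * h a) :=
        Real.sqrt_le_sqrt (by nlinarith [hh1 a ha, hh1 b hb, hhX b hb])
      have h2 : Real.sqrt (h a * h b) ≤ Real.sqrt (X * h b) :=
        Real.sqrt_le_sqrt (by nlinarith [hh1 a ha, hh1 b hb, hhX a ha])
      have hspos : 0 < Real.sqrt (h a * h b) :=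
        Real.sqrt_pos.2 (by nlinarith [hh1 a ha, hh1 b hb])
      have ra : r a ≤ c / (2 * Real.sqrt (h a * h b)) :=
        div_le_div_of_nonneg_left hc.le (by linarith) (by linarith)
      have rb : r b ≤ c / (2 * Real.sqrt (h a * h b)) :=
        div_le_div_of_nonneg_left hc.le (by linarith) (by linarith)
      have : c / (2 * Real.sqrt (h a * h b)) + c / (2 * Real.sqrt (h a * h b))
          = c / Real.sqrt (h a * h b) := by
        field_simp; ring
      linarith
    apply ball_disjoint_ball
    calc r a + r b ≤ c / Real.sqrt (h a * h b) := hsum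
      _ ≤ dist a b := hsep a ha b hb hab
  -- containment
  have hsub : ∀ a ∈ S, ball a (r a) ⊆ ball x₀ (ρ + c / 2) := by
    intro a ha x hx
    rw [mem_ball] at hx ⊢
    have := hS a ha
    rw [mem_closedBall] at this
    calc dist x x₀ ≤ dist x a + dist a x₀ := dist_triangle _ _ _
      _ < r a + ρ := by linarith
      _ ≤ ρ + c / 2 := by linarith [hrle a ha]
  -- measure comparison
  have hmeas : ∑ a ∈ S, volume (ball a (r a)) ≤ volume (ball x₀ (ρ + c / 2)) := by
    rw [← measure_biUnion_finset hdisj (fun a _ => measurableSet_ball)]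
    exact measure_mono (Set.iUnion₂_subset hsub)
  have hballvol : ∀ (x : EuclideanSpace ℝ (Fin d)) (s : ℝ), 0 ≤ s →
      volume (ball x s) = ENNReal.ofReal (s ^ d)
        * volume (ball (0 : EuclideanSpace ℝ (Fin d)) 1) := by
    haveI : Nonempty (Fin d) := ⟨⟨0, hd⟩⟩
    intro x s hs
    rw [Measure.addHaar_ball volume x hs, finrank_euclideanSpace_fin]
  have hR : (0:ℝ) ≤ ρ + c / 2 := by linarith
  have hV0 : volume (ball (0 : EuclideanSpace ℝ (Fin d)) 1) ≠ 0 := by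
    have : Nonempty (Fin d) := ⟨⟨0, hd⟩⟩
    exact (measure_ball_pos volume 0 one_pos).ne'
  have hVtop : volume (ball (0 : EuclideanSpace ℝ (Fin d)) 1) ≠ ⊤ :=
    measure_ball_lt_top.ne
  have hmeas2 : ∑ a ∈ S, ENNReal.ofReal (r a ^ d) ≤ ENNReal.ofReal ((ρ + c / 2) ^ d) := by
    rw [← ENNReal.mul_le_mul_iff_left hV0 hVtop, Finset.sum_mul]
    calc ∑ a ∈ S, ENNReal.ofReal (r a ^ d) * volume (ball (0 : EuclideanSpace ℝ (Fin d)) 1)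
        = ∑ a ∈ S, volume (ball a (r a)) := by
          refine Finset.sum_congr rfl fun a ha => ?_
          rw [hballvol a (r a) (hrpos a ha).le]
      _ ≤ volume (ball x₀ (ρ + c / 2)) := hmeas
      _ = _ := hballvol x₀ _ hR
  have hreal : ∑ a ∈ S, r a ^ d ≤ (ρ + c / 2) ^ d := by
    rw [← ENNReal.ofReal_le_ofReal_iff (by positivity),
      ENNReal.ofReal_sum_of_nonneg (fun a ha => by positivity)]
    exact hmeas2
  -- algebra
  have hrpow : ∀ a ∈ S, h a ^ (-(d : ℝ) / 2)
      = (2 / c) ^ d * X ^ ((d : ℝ) / 2) * r a ^ d := by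
    intro a ha
    have hha : (0:ℝ) < h a := lt_of_lt_of_le one_pos (hh1 a ha)
    have hXh : (0:ℝ) < X * h a := by positivity
    have hsqrtpow : Real.sqrt (X * h a) ^ d = (X * h a) ^ ((d : ℝ) / 2) := by
      rw [Real.sqrt_eq_rpow, ← Real.rpow_natCast ((X * h a) ^ ((1:ℝ)/2)) d,
        ← Real.rpow_mul hXh.le]
      ring_nf
    have : r a ^ d = (c / 2) ^ d * ((X * h a) ^ ((d : ℝ) / 2))⁻¹ := by
      rw [hrdef]
      simp only
      rw [div_pow, mul_pow, hsqrtpow]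
      rw [div_eq_mul_inv, mul_inv, div_pow]
      ring
    rw [this]
    have hXhrw : ((X * h a) ^ ((d : ℝ) / 2))⁻¹
        = X ^ (-(d : ℝ) / 2) * h a ^ (-(d : ℝ) / 2) := by
      rw [Real.mul_rpow hX0.le hha.le, mul_inv, ← Real.rpow_neg hX0.le,
        ← Real.rpow_neg hha.le, neg_div]
    rw [hXhrw]
    have h1 : (2 / c) ^ d * (c / 2) ^ d = 1 := by
      rw [← mul_pow]
      field_simp
      exact one_pow d
    have h2 : X ^ ((d : ℝ) / 2) * X ^ (-(d : ℝ) / 2) = 1 := by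
      rw [← Real.rpow_add hX0, show (d:ℝ)/2 + -(d:ℝ)/2 = 0 by ring, Real.rpow_zero]
    calc h a ^ (-(d : ℝ) / 2)
        = ((2 / c) ^ d * (c / 2) ^ d) * (X ^ ((d : ℝ) / 2) * X ^ (-(d : ℝ) / 2))
          * h a ^ (-(d : ℝ) / 2) := by rw [h1, h2]; ring
      _ = (2 / c) ^ d * X ^ ((d : ℝ) / 2)
          * ((c / 2) ^ d * (X ^ (-(d : ℝ) / 2) * h a ^ (-(d : ℝ) / 2))) := by ring
  calc ∑ a ∈ S, h a ^ (-(d : ℝ) / 2)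
      = (2 / c) ^ d * X ^ ((d : ℝ) / 2) * ∑ a ∈ S, r a ^ d := by
        rw [Finset.mul_sum]
        exact Finset.sum_congr rfl hrpow
    _ ≤ (2 / c) ^ d * X ^ ((d : ℝ) / 2) * (ρ + c / 2) ^ d := by
        apply mul_le_mul_of_nonneg_left hreal (by positivity)
    _ = (2 / c) ^ d * (ρ + c / 2) ^ d * X ^ ((d : ℝ) / 2) := by ring
end
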